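/- Let d, k ≥ 1, B > 0, ε ∈ (0,1), let U be a positive integer, let 𝒞 be a finite partition of ℝ^d into Borel sets, and let S be a finite tuple of points of ℝ^d. Suppose that for every A ∈ 𝒞 and every real polynomial p in d variables of degree at most k, (1/U)·Σ_{x∈S} p(x)²·1_A(x) ≤ E_{x∼N(0,I_d)}[p(x)²·1_A(x)] + (ε²/(|𝒞|·B²·(d+1)^k))·‖p‖²_coef, where the sum over x ∈ S counts entries with multiplicity and ‖p‖_coef denotes the Euclidean norm of the coefficient vector of p in the monomial basis. Then for every measurable function f : ℝ^d → {0,1} that has (ν, B)-sandwiching degree at most k in L2 norm under N(0,I_d) with respect to 𝒞, one has √((1/U)·Σ_{x∈S} f(x)) ≤ √(E_{x∼N(0,I_d)}[f(x)]) + √ν + ε. -/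

import Mathlib

open MeasureTheory ProbabilityTheory Real
open scoped ENNReal

noncomputable section

/-- The standard Gaussian measure `N(0, I_d)` on `ℝ^d`. -/
def stdGaussian (d : ℕ) : Measure (Fin d → ℝ) := Measure.pi fun _ => gaussianReal 0 1

/-- `f` has `(ν, B)`-sandwiching degree at most `k` in `L2` norm under `N(0, I_d)` with
respect to the partition `𝒞`: there are, for each `A ∈ 𝒞`, polynomials `p_down^A, p_up^A`
of degree at most `k` with coefficients bounded by `B`, such that
`Σ_A p_down^A·1_A ≤ f ≤ Σ_A p_up^A·1_A` pointwise and
`E_{N(0,I_d)}[(Σ_A (p_up^A - p_down^A)·1_A)²] ≤ ν`. -/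
def SandwichL2 {d : ℕ} (𝒞 : Finset (Set (Fin d → ℝ))) (f : (Fin d → ℝ) → ℝ)
    (k : ℕ) (ν B : ℝ) : Prop :=
  ∃ pd pu : Set (Fin d → ℝ) → MvPolynomial (Fin d) ℝ,
    (∀ A ∈ 𝒞, (pd A).totalDegree ≤ k ∧ (pu A).totalDegree ≤ k ∧
      (∀ m, |(pd A).coeff m| ≤ B) ∧ (∀ m, |(pu A).coeff m| ≤ B)) ∧
    (∀ x, (∑ A ∈ 𝒞, Set.indicator A (fun y => MvPolynomial.eval y (pd A)) x) ≤ f x ∧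
      f x ≤ ∑ A ∈ 𝒞, Set.indicator A (fun y => MvPolynomial.eval y (pu A)) x) ∧
    (∫ x, (∑ A ∈ 𝒞, Set.indicator A
        (fun y => MvPolynomial.eval y (pu A) - MvPolynomial.eval y (pd A)) x) ^ 2
      ∂(stdGaussian d)) ≤ ν

lemma integrable_pow_gaussian (n : ℕ) :
    Integrable (fun t : ℝ => t ^ n) (gaussianReal 0 1) := by
  rw [gaussianReal_of_var_ne_zero 0 one_ne_zero,
    integrable_withDensity_iff (measurable_gaussianPDF 0 1)
      (Filter.Eventually.of_forall fun x => ENNReal.ofReal_lt_top)]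
  have hpdf : ∀ x : ℝ, (gaussianPDF 0 1 x).toReal = (√(2 * π))⁻¹ * rexp (- x ^ 2 / 2) := by
    intro x
    rw [gaussianPDF, ENNReal.toReal_ofReal (gaussianPDFReal_nonneg 0 1 x), gaussianPDFReal]
    norm_num
  set C : ℝ := (√(2 * π))⁻¹ * n.factorial * Real.exp 2 with hC
  apply Integrable.mono' (((integrable_exp_neg_mul_sq (by norm_num : (0:ℝ) < 1/4)).const_mul C))
  · exact ((measurable_id.pow_const n).mul
      ((measurable_gaussianPDF 0 1).ennreal_toReal)).aestronglyMeasurable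
  · refine Filter.Eventually.of_forall fun x => ?_
    rw [hpdf, Real.norm_eq_abs, abs_mul, abs_pow, abs_mul, abs_of_nonneg (by positivity : (0:ℝ) ≤ (√(2 * π))⁻¹), abs_of_nonneg (Real.exp_pos _).le]
    have h1 : |x| ^ n ≤ n.factorial * Real.exp |x| := by
      have h2 : |x| ^ n / n.factorial ≤ Real.exp |x| := by
        calc |x| ^ n / n.factorial ≤ ∑ i ∈ Finset.range (n+1), |x| ^ i / i.factorial := by
              refine Finset.single_le_sum (f := fun i => |x| ^ i / (i.factorial : ℝ))
                (fun i _ => by positivity) (Finset.self_mem_range_succ n)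
          _ ≤ Real.exp |x| := Real.sum_le_exp_of_nonneg (abs_nonneg x) (n+1)
      have hfac : (0:ℝ) < n.factorial := by positivity
      calc |x| ^ n = n.factorial * (|x| ^ n / n.factorial) := by field_simp
        _ ≤ n.factorial * Real.exp |x| := by
            exact mul_le_mul_of_nonneg_left h2 hfac.le
    have h3 : Real.exp |x| * rexp (- x ^ 2 / 2) ≤ Real.exp 2 * rexp (-(1/4) * x ^ 2) := by
      rw [← Real.exp_add, ← Real.exp_add]
      apply Real.exp_le_exp.mpr
      nlinarith [sq_nonneg (|x| - 2), sq_abs x]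
    calc |x| ^ n * ((√(2 * π))⁻¹ * rexp (- x ^ 2 / 2))
        ≤ (n.factorial * Real.exp |x|) * ((√(2 * π))⁻¹ * rexp (- x ^ 2 / 2)) := by
          apply mul_le_mul_of_nonneg_right h1 (by positivity)
      _ = (√(2 * π))⁻¹ * n.factorial * (Real.exp |x| * rexp (- x ^ 2 / 2)) := by ring
      _ ≤ (√(2 * π))⁻¹ * n.factorial * (Real.exp 2 * rexp (-(1/4) * x ^ 2)) := by
          apply mul_le_mul_of_nonneg_left h3 (by positivity)
      _ = C * rexp (-(1/4) * x ^ 2) := by rw [hC]; ring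

lemma integrable_monomial_stdGaussian {d : ℕ} (m : Fin d → ℕ) :
    Integrable (fun x : Fin d → ℝ => ∏ i, x i ^ m i)
      (Measure.pi fun _ : Fin d => gaussianReal 0 1) := by
  letI : MeasureSpace ℝ := ⟨gaussianReal 0 1⟩
  haveI : SigmaFinite (volume : Measure ℝ) :=
    inferInstanceAs (SigmaFinite (gaussianReal 0 1))
  exact Integrable.fin_nat_prod (f := fun i (t : ℝ) => t ^ m i)
    (fun i => integrable_pow_gaussian (m i))

lemma integrable_eval_stdGaussian {d : ℕ} (p : MvPolynomial (Fin d) ℝ) :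
    Integrable (fun x : Fin d → ℝ => MvPolynomial.eval x p)
      (Measure.pi fun _ : Fin d => gaussianReal 0 1) := by
  have : (fun x : Fin d → ℝ => MvPolynomial.eval x p)
      = fun x => ∑ m ∈ p.support, p.coeff m * ∏ i, x i ^ m i := by
    funext x
    rw [MvPolynomial.eval_eq']
  rw [this]
  exact integrable_finset_sum _ fun m _ =>
    (integrable_monomial_stdGaussian (fun i => m i)).const_mul _

lemma card_le_of_degree_le {d : ℕ} : ∀ (k : ℕ) (T : Finset (Fin d →₀ ℕ)),
    (∀ m ∈ T, (m.sum fun _ e => e) ≤ k) → T.card ≤ (d + 1) ^ k := by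
  classical
  have hsum_eq : ∀ m : Fin d →₀ ℕ, (m.sum fun _ e => e) = ∑ a, m a := fun m =>
    Finsupp.sum_fintype _ _ (fun _ => rfl)
  have hkey : ∀ (m : Fin d →₀ ℕ) (i : Fin d), i ∈ m.support →
      (m - Finsupp.single i 1) + Finsupp.single i 1 = m := by
    intro m i hi
    ext a
    have h1 : 1 ≤ m i := Nat.one_le_iff_ne_zero.mpr (Finsupp.mem_support_iff.mp hi)
    simp only [Finsupp.add_apply, Finsupp.tsub_apply]
    rcases eq_or_ne a i with rfl | hne
    · simp only [Finsupp.single_eq_same]; omega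
    · simp [Finsupp.single_eq_of_ne' (Ne.symm hne)]
  intro k
  induction k with
  | zero =>
    intro T hT
    have hsub : T ⊆ {0} := by
      intro m hm
      simp only [Finset.mem_singleton]
      ext a
      have hz : (m.sum fun _ e => e) = 0 := Nat.le_zero.mp (hT m hm)
      rw [hsum_eq] at hz
      have := Finset.sum_eq_zero_iff.mp hz a (Finset.mem_univ a)
      simpa using this
    simpa using Finset.card_le_card hsub
  | succ k ih =>
    intro T hT
    set φ : (Fin d →₀ ℕ) → Option (Fin d) × (Fin d →₀ ℕ) := fun m =>
      if h : m = 0 then (none, 0)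
      else ((some (m.support.min' (Finsupp.support_nonempty_iff.mpr h))),
        m - Finsupp.single (m.support.min' (Finsupp.support_nonempty_iff.mpr h)) 1) with hφ
    have hinj : Set.InjOn φ T := by
      intro m _ m' _ head
      by_cases h : m = 0 <;> by_cases h' : m' = 0
      · rw [h, h']
      · simp only [hφ, dif_pos h, dif_neg h'] at head
        exact absurd (congrArg Prod.fst head) (by simp)
      · simp only [hφ, dif_neg h, dif_pos h'] at head
        exact absurd (congrArg Prod.fst head) (by simp)
      · simp only [hφ, dif_neg h, dif_neg h', Prod.mk.injEq, Option.some.injEq] at head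
        obtain ⟨h1, h2⟩ := head
        have hm := hkey m _ (m.support.min'_mem (Finsupp.support_nonempty_iff.mpr h))
        have hm' := hkey m' _ (m'.support.min'_mem (Finsupp.support_nonempty_iff.mpr h'))
        rw [← hm, ← hm', h2, h1]
    set T' : Finset (Fin d →₀ ℕ) := T.image (fun m => (φ m).2) with hT'
    have hT'le : ∀ m' ∈ T', (m'.sum fun _ e => e) ≤ k := by
      intro m' hm'
      obtain ⟨m, hm, rfl⟩ := Finset.mem_image.mp hm'
      by_cases h : m = 0
      · simp [hφ, h]
      · simp only [hφ, dif_neg h]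
        set i := m.support.min' (Finsupp.support_nonempty_iff.mpr h)
        have hrec := hkey m i (m.support.min'_mem _)
        have hpt : ∀ a, m a = ((m - Finsupp.single i 1 : Fin d →₀ ℕ) a) + (Finsupp.single i 1 : Fin d →₀ ℕ) a := by
          intro a
          conv_lhs => rw [← hrec]
          simp [Finsupp.add_apply]
        have hsingle : ∑ a, (Finsupp.single i 1 : Fin d →₀ ℕ) a = 1 := by
          rw [Finset.sum_eq_single i (fun b _ hb => Finsupp.single_eq_of_ne' (Ne.symm hb))
            (fun hb => absurd (Finset.mem_univ i) hb)]
          exact Finsupp.single_eq_same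
        have hs : ((m - Finsupp.single i 1).sum fun _ e => e) + 1 = (m.sum fun _ e => e) := by
          rw [hsum_eq, hsum_eq,
            show (∑ a, m a) = ∑ a, (((m - Finsupp.single i 1 : Fin d →₀ ℕ) a) + (Finsupp.single i 1 : Fin d →₀ ℕ) a) from
              Finset.sum_congr rfl fun a _ => hpt a,
            Finset.sum_add_distrib, hsingle]
        have := hT m hm
        omega
    have hcard : T.card = (T.image φ).card := (Finset.card_image_of_injOn hinj).symm
    have hssub : T.image φ ⊆ (Finset.univ : Finset (Option (Fin d))) ×ˢ T' := by
      intro x hx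
      obtain ⟨m, hm, rfl⟩ := Finset.mem_image.mp hx
      refine Finset.mem_product.mpr ⟨Finset.mem_univ _, ?_⟩
      exact Finset.mem_image.mpr ⟨m, hm, rfl⟩
    calc T.card ≤ ((Finset.univ : Finset (Option (Fin d))) ×ˢ T').card := by
          rw [hcard]; exact Finset.card_le_card hssub
      _ = (d + 1) * T'.card := by
          rw [Finset.card_product]
          simp [Fintype.card_option]
      _ ≤ (d + 1) * (d + 1) ^ k := Nat.mul_le_mul_left _ (ih T' hT'le)
      _ = (d + 1) ^ (k + 1) := by ring

lemma sqrt_add_le' {a b : ℝ} (ha : 0 ≤ a) (hb : 0 ≤ b) :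
    Real.sqrt (a + b) ≤ Real.sqrt a + Real.sqrt b := by
  calc Real.sqrt (a + b) ≤ Real.sqrt ((Real.sqrt a + Real.sqrt b) ^ 2) := by
        apply Real.sqrt_le_sqrt
        nlinarith [Real.sq_sqrt ha, Real.sq_sqrt hb, Real.sqrt_nonneg a, Real.sqrt_nonneg b]
    _ = Real.sqrt a + Real.sqrt b := Real.sqrt_sq (by positivity)


set_option maxHeartbeats 1000000 in
/-- If the cellwise second moments of all polynomials of degree at most `k` on the sample
are spectrally dominated by the corresponding Gaussian moments (up to
`(ε²/(|𝒞|·B²·(d+1)^k))·‖p‖²_coef`), then for every `{0,1}`-valued function `f` with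
`(ν, B)`-sandwiching degree at most `k` in `L2` under `N(0, I_d)` w.r.t. `𝒞`,
`√((1/U)·Σ_{x∈S} f(x)) ≤ √(E_{N(0,I_d)}[f]) + √ν + ε`. -/
theorem sandwiching_L2_implies_fooling
    {d k : ℕ} (hd : 1 ≤ d) (hk : 1 ≤ k) (B ε ν : ℝ) (hB : 0 < B) (hε : ε ∈ Set.Ioo (0:ℝ) 1)
    (U : ℕ) (hU : 0 < U)
    (𝒞 : Finset (Set (Fin d → ℝ)))
    (hmeas : ∀ A ∈ 𝒞, MeasurableSet A)
    (hdisj : ∀ A ∈ 𝒞, ∀ A' ∈ 𝒞, A ≠ A' → Disjoint A A')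
    (hcover : ⋃₀ (𝒞 : Set (Set (Fin d → ℝ))) = Set.univ)
    {N : ℕ} (S : Fin N → (Fin d → ℝ))
    (hmom : ∀ A ∈ 𝒞, ∀ p : MvPolynomial (Fin d) ℝ, p.totalDegree ≤ k →
      (1 / (U : ℝ)) * ∑ i, Set.indicator A (fun y => (MvPolynomial.eval y p) ^ 2) (S i)
        ≤ (∫ x, Set.indicator A (fun y => (MvPolynomial.eval y p) ^ 2) x ∂(stdGaussian d))
          + (ε ^ 2 / ((𝒞.card : ℝ) * B ^ 2 * ((d : ℝ) + 1) ^ k))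
            * ∑ m ∈ p.support, (p.coeff m) ^ 2)
    (f : (Fin d → ℝ) → ℝ) (hf01 : ∀ x, f x = 0 ∨ f x = 1) (hfmeas : Measurable f)
    (hsand : SandwichL2 𝒞 f k ν B) :
    Real.sqrt ((1 / (U : ℝ)) * ∑ i, f (S i))
      ≤ Real.sqrt (∫ x, f x ∂(stdGaussian d)) + Real.sqrt ν + ε := by
  classical
  obtain ⟨pd, pu, hdegs, hpt, hint⟩ := hsand
  haveI hprob : IsProbabilityMeasure (stdGaussian d) := by
    unfold _root_.stdGaussian; infer_instance
  -- basic facts about f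
  have hf0 : ∀ x, 0 ≤ f x := fun x => by rcases hf01 x with h | h <;> simp [h]
  have hf1 : ∀ x, f x ≤ 1 := fun x => by rcases hf01 x with h | h <;> simp [h]
  have hfsq : ∀ x, f x ^ 2 = f x := fun x => by rcases hf01 x with h | h <;> simp [h]
  -- the unique cell of each point
  have hcell : ∀ x : Fin d → ℝ, ∃ A, A ∈ 𝒞 ∧ x ∈ A := by
    intro x
    have hx : x ∈ ⋃₀ (𝒞 : Set (Set (Fin d → ℝ))) := by rw [hcover]; trivial
    obtain ⟨A, hA, hxA⟩ := hx
    exact ⟨A, hA, hxA⟩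
  choose Cx hCx1 hCx2 using hcell
  have key : ∀ (φ : Set (Fin d → ℝ) → (Fin d → ℝ) → ℝ) (x : Fin d → ℝ),
      ∑ A ∈ 𝒞, Set.indicator A (φ A) x = φ (Cx x) x := by
    intro φ x
    rw [Finset.sum_eq_single_of_mem (Cx x) (hCx1 x)]
    · exact Set.indicator_of_mem (hCx2 x) _
    · intro A hA hne
      apply Set.indicator_of_notMem
      exact fun hxA => (Set.disjoint_left.mp (hdisj A hA (Cx x) (hCx1 x) hne) hxA) (hCx2 x)
  set g : (Fin d → ℝ) → ℝ :=
    fun x => ∑ A ∈ 𝒞, Set.indicator A (fun y => MvPolynomial.eval y (pu A)) x with hgdef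
  set e : (Fin d → ℝ) → ℝ := fun x => ∑ A ∈ 𝒞, Set.indicator A
    (fun y => MvPolynomial.eval y (pu A) - MvPolynomial.eval y (pd A)) x with hedef
  have hgx : ∀ x, g x = MvPolynomial.eval x (pu (Cx x)) := fun x => key _ x
  have hex : ∀ x, e x = MvPolynomial.eval x (pu (Cx x)) - MvPolynomial.eval x (pd (Cx x)) :=
    fun x => key _ x
  have hgsq : ∀ x, (∑ A ∈ 𝒞, Set.indicator A (fun y => MvPolynomial.eval y (pu A) ^ 2) x)
      = g x ^ 2 := fun x => by rw [key, hgx]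
  have hesq : ∀ x, (∑ A ∈ 𝒞, Set.indicator A
      (fun y => (MvPolynomial.eval y (pu A) - MvPolynomial.eval y (pd A)) ^ 2) x)
      = e x ^ 2 := fun x => by rw [key, hex]
  have hfg : ∀ x, f x ≤ g x := fun x => (hpt x).2
  have hue : ∀ x, g x - f x ≤ e x := by
    intro x
    have h1 := (hpt x).1
    rw [key] at h1
    rw [hex, hgx]
    linarith
  have hu0 : ∀ x, 0 ≤ g x - f x := fun x => sub_nonneg.mpr (hfg x)
  have hfgsq : ∀ x, f x ≤ g x ^ 2 := by
    intro x
    rcases hf01 x with h | h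
    · rw [h]; positivity
    · have := hfg x; rw [h] at this ⊢; nlinarith
  -- integrability
  have int_eval : ∀ p : MvPolynomial (Fin d) ℝ,
      Integrable (fun x => MvPolynomial.eval x p) (stdGaussian d) := fun p =>
    integrable_eval_stdGaussian p
  have meas_eval : ∀ p : MvPolynomial (Fin d) ℝ,
      Measurable (fun x : Fin d → ℝ => MvPolynomial.eval x p) := fun p =>
    (MvPolynomial.continuous_eval p).measurable
  have int_evalsq : ∀ p : MvPolynomial (Fin d) ℝ,
      Integrable (fun x => MvPolynomial.eval x p ^ 2) (stdGaussian d) := by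
    intro p
    have h := int_eval (p * p)
    simp only [map_mul] at h
    simpa [sq] using h
  have int_g : Integrable g (stdGaussian d) :=
    integrable_finset_sum _ fun A hA => (int_eval (pu A)).indicator (hmeas A hA)
  have int_e : Integrable e (stdGaussian d) :=
    integrable_finset_sum _ fun A hA =>
      ((int_eval (pu A)).sub (int_eval (pd A))).indicator (hmeas A hA)
  have meas_g : Measurable g :=
    Finset.measurable_sum _ fun A hA => (meas_eval (pu A)).indicator (hmeas A hA)
  have int_ind_sq : ∀ A ∈ 𝒞, ∀ p : MvPolynomial (Fin d) ℝ,
      Integrable (Set.indicator A (fun y => MvPolynomial.eval y p ^ 2)) (stdGaussian d) :=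
    fun A hA p => (int_evalsq p).indicator (hmeas A hA)
  have int_gsq : Integrable (fun x => g x ^ 2) (stdGaussian d) := by
    have h : (fun x => g x ^ 2) = fun x =>
        ∑ A ∈ 𝒞, Set.indicator A (fun y => MvPolynomial.eval y (pu A) ^ 2) x :=
      funext fun x => (hgsq x).symm
    rw [h]
    exact integrable_finset_sum _ fun A hA => int_ind_sq A hA (pu A)
  have int_esq : Integrable (fun x => e x ^ 2) (stdGaussian d) := by
    have h : (fun x => e x ^ 2) = fun x => ∑ A ∈ 𝒞, Set.indicator A
        (fun y => (MvPolynomial.eval y (pu A) - MvPolynomial.eval y (pd A)) ^ 2) x :=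
      funext fun x => (hesq x).symm
    rw [h]
    refine integrable_finset_sum _ fun A hA => Integrable.indicator ?_ (hmeas A hA)
    have h2 := int_evalsq (pu A - pd A)
    simpa [map_sub] using h2
  have int_f : Integrable f (stdGaussian d) := by
    refine Integrable.mono' (integrable_const (1:ℝ)) hfmeas.aestronglyMeasurable ?_
    filter_upwards with x
    rcases hf01 x with h | h <;> simp [h]
  have int_fsq : Integrable (fun x => f x ^ 2) (stdGaussian d) := by
    have h : (fun x => f x ^ 2) = f := funext fun x => hfsq x
    rw [h]; exact int_f
  have int_u : Integrable (fun x => g x - f x) (stdGaussian d) := int_g.sub int_f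
  have int_usq : Integrable (fun x => (g x - f x) ^ 2) (stdGaussian d) := by
    refine int_esq.mono ((meas_g.sub hfmeas).pow_const 2).aestronglyMeasurable ?_
    filter_upwards with x
    have h1 := hu0 x; have h2 := hue x
    rw [Real.norm_eq_abs, Real.norm_eq_abs, abs_of_nonneg (sq_nonneg _),
      abs_of_nonneg (sq_nonneg _)]
    nlinarith
  have int_fu : Integrable (fun x => f x * (g x - f x)) (stdGaussian d) := by
    refine int_u.mono (hfmeas.mul (meas_g.sub hfmeas)).aestronglyMeasurable ?_
    filter_upwards with x
    have haf : |f x| ≤ 1 := by rw [abs_of_nonneg (hf0 x)]; exact hf1 x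
    calc ‖f x * (g x - f x)‖ = |f x| * |g x - f x| := by rw [Real.norm_eq_abs, abs_mul]
      _ ≤ 1 * |g x - f x| := mul_le_mul_of_nonneg_right haf (abs_nonneg _)
      _ = ‖g x - f x‖ := by rw [one_mul, Real.norm_eq_abs]
  -- integral quantities
  set F : ℝ := ∫ x, f x ∂(stdGaussian d) with hFdef
  set V : ℝ := ∫ x, (g x - f x) ^ 2 ∂(stdGaussian d) with hVdef
  have hF0 : 0 ≤ F := integral_nonneg hf0
  have hV0 : 0 ≤ V := integral_nonneg fun x => sq_nonneg _
  have hFsq : (∫ x, f x ^ 2 ∂(stdGaussian d)) = F := by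
    rw [hFdef]
    exact congrArg _ (funext fun x => hfsq x)
  have hVν : V ≤ ν := by
    refine le_trans (integral_mono int_usq int_esq fun x => ?_) ?_
    · have h1 := hu0 x; have h2 := hue x; nlinarith
    · exact hint
  have hν0 : 0 ≤ ν := le_trans (integral_nonneg fun x => sq_nonneg _) hint
  -- Cauchy–Schwarz
  have hconj : Real.HolderConjugate 2 2 := (Real.holderConjugate_iff_eq_conjExponent one_lt_two).mpr (by norm_num)
  have hmemf : MemLp f (ENNReal.ofReal 2) (stdGaussian d) := by
    rw [ENNReal.ofReal_ofNat]
    exact (memLp_two_iff_integrable_sq hfmeas.aestronglyMeasurable).mpr int_fsq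
  have hmemu : MemLp (fun x => g x - f x) (ENNReal.ofReal 2) (stdGaussian d) := by
    rw [ENNReal.ofReal_ofNat]
    exact (memLp_two_iff_integrable_sq
      (meas_g.sub hfmeas).aestronglyMeasurable).mpr int_usq
  have hCS := integral_mul_le_Lp_mul_Lq_of_nonneg hconj
    (Filter.Eventually.of_forall hf0) (Filter.Eventually.of_forall hu0) hmemf hmemu
  have hCS' : (∫ x, f x * (g x - f x) ∂(stdGaussian d)) ≤ Real.sqrt F * Real.sqrt V := by
    refine le_trans hCS (le_of_eq ?_)
    have h1 : (fun x : Fin d → ℝ => f x ^ (2:ℝ)) = fun x => f x ^ 2 :=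
      funext fun x => Real.rpow_two (f x)
    have h2 : (fun x : Fin d → ℝ => (g x - f x) ^ (2:ℝ)) = fun x => (g x - f x) ^ 2 :=
      funext fun x => Real.rpow_two _
    rw [h1, h2, hFsq, ← hVdef, ← Real.sqrt_eq_rpow, ← Real.sqrt_eq_rpow]
  -- expansion of ∫ g²
  have hexp : (∫ x, g x ^ 2 ∂(stdGaussian d))
      = F + 2 * (∫ x, f x * (g x - f x) ∂(stdGaussian d)) + V := by
    have h : (fun x => g x ^ 2)
        = fun x => (f x ^ 2 + 2 * (f x * (g x - f x))) + (g x - f x) ^ 2 :=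
      funext fun x => by ring
    have i1 : Integrable (fun x => 2 * (f x * (g x - f x))) (stdGaussian d) :=
      int_fu.const_mul 2
    have i2 : Integrable (fun x => f x ^ 2 + 2 * (f x * (g x - f x))) (stdGaussian d) :=
      int_fsq.add i1
    rw [h, integral_add i2 int_usq, integral_add int_fsq i1, MeasureTheory.integral_const_mul 2, hFsq]
  have hgsq_le : (∫ x, g x ^ 2 ∂(stdGaussian d)) ≤ (Real.sqrt F + Real.sqrt V) ^ 2 := by
    rw [hexp]
    have h1 := Real.sq_sqrt hF0
    have h2 := Real.sq_sqrt hV0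
    nlinarith [hCS', Real.sqrt_nonneg F, Real.sqrt_nonneg V]
  -- sample side
  set δ : ℝ := ε ^ 2 / ((𝒞.card : ℝ) * B ^ 2 * ((d : ℝ) + 1) ^ k) with hδdef
  have hcard1 : 1 ≤ 𝒞.card := Finset.card_pos.mpr ⟨Cx (fun _ => 0), hCx1 _⟩
  have hcardR : (0:ℝ) < (𝒞.card : ℝ) := by exact_mod_cast hcard1
  have hX : (0:ℝ) < (𝒞.card : ℝ) * B ^ 2 * ((d : ℝ) + 1) ^ k := by positivity
  have hδ0 : 0 ≤ δ := by rw [hδdef]; positivity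
  have hcoef : ∀ A ∈ 𝒞, (∑ m ∈ (pu A).support, ((pu A).coeff m) ^ 2)
      ≤ B ^ 2 * ((d:ℝ)+1) ^ k := by
    intro A hA
    obtain ⟨-, hdeg, -, hcoefB⟩ := hdegs A hA
    calc ∑ m ∈ (pu A).support, ((pu A).coeff m) ^ 2
        ≤ ∑ _m ∈ (pu A).support, B ^ 2 := by
          refine Finset.sum_le_sum fun m _ => ?_
          have h := hcoefB m
          have h2 := pow_le_pow_left₀ (abs_nonneg ((pu A).coeff m)) h 2
          rwa [sq_abs] at h2
      _ = ((pu A).support.card : ℝ) * B ^ 2 := by rw [Finset.sum_const, nsmul_eq_mul]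
      _ ≤ (((d+1)^k : ℕ) : ℝ) * B ^ 2 := by
          have hc := card_le_of_degree_le k (pu A).support fun m hm =>
            le_trans (MvPolynomial.le_totalDegree hm) hdeg
          have hcr : ((pu A).support.card : ℝ) ≤ (((d+1)^k : ℕ) : ℝ) := by exact_mod_cast hc
          exact mul_le_mul_of_nonneg_right hcr (by positivity)
      _ = B ^ 2 * ((d:ℝ)+1) ^ k := by push_cast; ring
  have hsample : (1 / (U : ℝ)) * ∑ i, f (S i)
      ≤ (∫ x, g x ^ 2 ∂(stdGaussian d)) + ε ^ 2 := by
    have h1 : (1 / (U : ℝ)) * ∑ i, f (S i) ≤ (1 / (U : ℝ)) * ∑ i,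
        ∑ A ∈ 𝒞, Set.indicator A (fun y => MvPolynomial.eval y (pu A) ^ 2) (S i) := by
      refine mul_le_mul_of_nonneg_left (Finset.sum_le_sum fun i _ => ?_) (by positivity)
      calc f (S i) ≤ g (S i) ^ 2 := hfgsq _
        _ = _ := (hgsq _).symm
    have h2 : (1 / (U : ℝ)) * (∑ i, ∑ A ∈ 𝒞,
          Set.indicator A (fun y => MvPolynomial.eval y (pu A) ^ 2) (S i))
        = ∑ A ∈ 𝒞, (1 / (U : ℝ)) *
          ∑ i, Set.indicator A (fun y => MvPolynomial.eval y (pu A) ^ 2) (S i) := by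
      rw [Finset.sum_comm, Finset.mul_sum]
    have h3 : ∀ A ∈ 𝒞, (1 / (U : ℝ)) *
          (∑ i, Set.indicator A (fun y => MvPolynomial.eval y (pu A) ^ 2) (S i))
        ≤ (∫ x, Set.indicator A (fun y => MvPolynomial.eval y (pu A) ^ 2) x ∂(stdGaussian d))
          + δ * (B ^ 2 * ((d:ℝ)+1) ^ k) := by
      intro A hA
      refine le_trans (hmom A hA (pu A) (hdegs A hA).2.1) ?_
      rw [hδdef]
      refine add_le_add_right ?_ _
      rw [mul_assoc] at *
      exact mul_le_mul_of_nonneg_left (hcoef A hA) (by rw [hδdef] at hδ0; exact hδ0)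
    have h4 : ∑ A ∈ 𝒞, ((∫ x, Set.indicator A
            (fun y => MvPolynomial.eval y (pu A) ^ 2) x ∂(stdGaussian d))
          + δ * (B ^ 2 * ((d:ℝ)+1) ^ k))
        = (∫ x, g x ^ 2 ∂(stdGaussian d)) + (𝒞.card : ℝ) * (δ * (B ^ 2 * ((d:ℝ)+1) ^ k)) := by
      rw [Finset.sum_add_distrib, Finset.sum_const, nsmul_eq_mul]
      congr 1
      rw [← integral_finset_sum _ (fun A hA => int_ind_sq A hA (pu A))]
      exact integral_congr_ae (Filter.Eventually.of_forall fun x => hgsq x)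
    have h5 : (𝒞.card : ℝ) * (δ * (B ^ 2 * ((d:ℝ)+1) ^ k)) = ε ^ 2 := by
      rw [hδdef]
      field_simp
    calc (1 / (U : ℝ)) * ∑ i, f (S i)
        ≤ ∑ A ∈ 𝒞, (1 / (U : ℝ)) *
            ∑ i, Set.indicator A (fun y => MvPolynomial.eval y (pu A) ^ 2) (S i) := by
          rw [← h2]; exact h1
      _ ≤ ∑ A ∈ 𝒞, ((∫ x, Set.indicator A
              (fun y => MvPolynomial.eval y (pu A) ^ 2) x ∂(stdGaussian d))
            + δ * (B ^ 2 * ((d:ℝ)+1) ^ k)) := Finset.sum_le_sum h3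
      _ = (∫ x, g x ^ 2 ∂(stdGaussian d)) + ε ^ 2 := by rw [h4, h5]
  -- conclusion
  have hfinal : (1 / (U : ℝ)) * ∑ i, f (S i)
      ≤ (Real.sqrt F + Real.sqrt V) ^ 2 + ε ^ 2 :=
    le_trans hsample (add_le_add_left hgsq_le _)
  calc Real.sqrt ((1 / (U : ℝ)) * ∑ i, f (S i))
      ≤ Real.sqrt ((Real.sqrt F + Real.sqrt V) ^ 2 + ε ^ 2) := Real.sqrt_le_sqrt hfinal
    _ ≤ Real.sqrt ((Real.sqrt F + Real.sqrt V) ^ 2) + Real.sqrt (ε ^ 2) :=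
        sqrt_add_le' (by positivity) (by positivity)
    _ = (Real.sqrt F + Real.sqrt V) + ε := by
        rw [Real.sqrt_sq (by positivity), Real.sqrt_sq hε.1.le]
    _ ≤ Real.sqrt F + Real.sqrt ν + ε := by
        have hsv := Real.sqrt_le_sqrt hVν
        linarith

end
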